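/- In the finite discrete S-IntroVAE setting with a learnable prior, fix a prior pλ and decoder d, and let q* be the posterior encoder q* x z = pλ z · d z x / p^{λ}_{d} x. Then the encoder objective evaluated at q* satisfies the identity L_q(pλ, q*, d) = −KL(p_data ‖ p^{λ}_{d}) + ∑_x p_data x · log(p_data x) − (1/α)·∑_x (p^{λ}_{d} x)^{α+1}, where KL(p_data ‖ p^{λ}_{d}) = ∑_x p_data x · log(p_data x / p^{λ}_{d} x) and the power is a real power. -/
import Mathlib


open Finset

theorem stmt_10 {X Z : Type*} [Fintype X] [Fintype Z] [Nonempty X] [Nonempty Z]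
    (pl : Z → ℝ) (hpl : ∀ z, 0 < pl z) (hpl_sum : ∑ z, pl z = 1)
    (d : Z → X → ℝ) (hd : ∀ z x, 0 < d z x) (hd_sum : ∀ z, ∑ x, d z x = 1)
    (pdata : X → ℝ) (hpdata : ∀ x, 0 < pdata x) (hpdata_sum : ∑ x, pdata x = 1)
    (α : ℝ) (hα : 1 ≤ α)
    (pd : X → ℝ) (hpd : ∀ x, pd x = ∑ z, pl z * d z x)
    (qstar : X → Z → ℝ) (hqstar : ∀ x z, qstar x z = pl z * d z x / pd x)
    (W : X → ℝ)
    (hW : ∀ x, W x = (∑ z, qstar x z * Real.log (d z x)) -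
      ∑ z, qstar x z * Real.log (qstar x z / pl z))
    (Lq : ℝ)
    (hLq : Lq = (∑ x, pdata x * W x) - (1 / α) * ∑ x, pd x * Real.exp (α * W x)) :
    Lq = -(∑ x, pdata x * Real.log (pdata x / pd x))
      + (∑ x, pdata x * Real.log (pdata x))
      - (1 / α) * ∑ x, pd x ^ (α + 1) := by
  have hpd_pos : ∀ x, 0 < pd x := by
    intro x
    rw [hpd]
    exact Finset.sum_pos (fun z _ => mul_pos (hpl z) (hd z x)) univ_nonempty
  have hq_pos : ∀ x z, 0 < qstar x z := fun x z => by
    rw [hqstar]; exact div_pos (mul_pos (hpl z) (hd z x)) (hpd_pos x)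
  have hq_sum : ∀ x, ∑ z, qstar x z = 1 := by
    intro x
    simp only [hqstar, div_eq_mul_inv, ← Finset.sum_mul]
    rw [← hpd x, mul_inv_cancel₀ (hpd_pos x).ne']
  have hWlog : ∀ x, W x = Real.log (pd x) := by
    intro x
    rw [hW]
    have : ∀ z, qstar x z * Real.log (qstar x z / pl z)
        = qstar x z * Real.log (d z x) - qstar x z * Real.log (pd x) := by
      intro z
      rw [hqstar]
      rw [div_div, mul_comm (pd x) (pl z), ← div_div,
        mul_div_cancel_left₀ _ (hpl z).ne',
        Real.log_div (hd z x).ne' (hpd_pos x).ne']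
      ring
    simp only [this, Finset.sum_sub_distrib, ← Finset.sum_mul, hq_sum x]
    ring
  have hpow : ∀ x, pd x * Real.exp (α * W x) = pd x ^ (α + 1) := by
    intro x
    rw [hWlog, mul_comm α, ← Real.rpow_def_of_pos (hpd_pos x),
      Real.rpow_add (hpd_pos x), Real.rpow_one]
    ring
  have hlog : ∀ x, pdata x * W x
      = -(pdata x * Real.log (pdata x / pd x)) + pdata x * Real.log (pdata x) := by
    intro x
    rw [hWlog, Real.log_div (hpdata x).ne' (hpd_pos x).ne']
    ring
  simp only [hLq, hlog, hpow, Finset.sum_add_distrib, Finset.sum_neg_distrib]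
  try ring
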